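/- arXiv:2412.03487 — 7 statements merged into one kernel-verified Lean document; each statement's English description precedes it below -/
import Mathlib

section
/- Let T be a finite set, p_t a time-dependent probability mass function on T, and j_t : T × T → ℝ a flux satisfying: (i) the discrete continuity equation ∂_t p_t(x) + Σ_{z≠x} j_t(z,x) − Σ_{z≠x} j_t(x,z) = 0 for all x; (ii) j_t(x,z) ≥ 0 for x ≠ z; (iii) p_t(z) = 0 implies j_t(x,z) = 0 for all x. Define u_t(x,z) = j_t(x,z)/p_t(z) if p_t(z) > 0 and u_t(x,z) = 0 otherwise, for x ≠ z, and u_t(z,z) = −Σ_{x≠z} u_t(x,z). Then u_t satisfies the rate conditions (u_t(x,z) ≥ 0 for x ≠ z and Σ_x u_t(x,z) = 0) and the Kolmogorov forward equation ∂_t p_t(x) = Σ_z u_t(x,z) p_t(z) holds for all x. -/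
open Finset

/-- Velocity obtained from a non-negative, safe flux satisfying the discrete
continuity equation satisfies the rate conditions and the Kolmogorov forward
equation. -/
theorem velocity_from_flux {T : Type*} [Fintype T] [DecidableEq T]
    (p dp : T → ℝ) (j u : T → T → ℝ)
    (hp : ∀ x, 0 ≤ p x) (hpsum : ∑ x, p x = 1)
    (hcont : ∀ x, dp x + ((∑ z ∈ Finset.univ.erase x, j z x)
        - ∑ z ∈ Finset.univ.erase x, j x z) = 0)
    (hjnn : ∀ x z, x ≠ z → 0 ≤ j x z)
    (hsafe : ∀ x z, p z = 0 → j x z = 0)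
    (hu_off : ∀ x z, x ≠ z → u x z = if 0 < p z then j x z / p z else 0)
    (hu_diag : ∀ z, u z z = - ∑ x ∈ Finset.univ.erase z, u x z) :
    (∀ x z, x ≠ z → 0 ≤ u x z) ∧
    (∀ z, ∑ x, u x z = 0) ∧
    (∀ x, dp x = ∑ z, u x z * p z) := by
  have hmul : ∀ x z, x ≠ z → u x z * p z = j x z := by
    intro x z hxz
    rw [hu_off x z hxz]
    rcases lt_or_eq_of_le (hp z) with h | h
    · rw [if_pos h, div_mul_cancel₀ _ (ne_of_gt h)]
    · rw [if_neg (by rw [← h]; exact lt_irrefl 0), zero_mul, hsafe x z h.symm]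
  refine ⟨?_, ?_, ?_⟩
  · intro x z hxz
    rw [hu_off x z hxz]
    split_ifs with h
    · exact div_nonneg (hjnn x z hxz) (le_of_lt h)
    · exact le_refl 0
  · intro z
    rw [← Finset.add_sum_erase _ _ (Finset.mem_univ z), hu_diag z, neg_add_cancel]
  · intro x
    have key : dp x = (∑ z ∈ Finset.univ.erase x, j x z)
        - ∑ z ∈ Finset.univ.erase x, j z x := by linarith [hcont x]
    rw [← Finset.add_sum_erase _ (fun z => u x z * p z) (Finset.mem_univ x), key]
    have h1 : ∑ z ∈ Finset.univ.erase x, u x z * p z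
        = ∑ z ∈ Finset.univ.erase x, j x z := by
      apply Finset.sum_congr rfl
      intro z hz
      exact hmul x z (Finset.ne_of_mem_erase hz).symm
    have h2 : u x x * p x = - ∑ z ∈ Finset.univ.erase x, j z x := by
      rw [hu_diag x, neg_mul, Finset.sum_mul, neg_inj]
      apply Finset.sum_congr rfl
      intro z hz
      exact hmul z x (Finset.ne_of_mem_erase hz)
    rw [h1, h2]
    ring
end

section
/- Let T be a finite set, p_t(x) > 0 a differentiable probability path on T, and τ_t : T → ℝ_{≥0} with Σ_s τ_t(s) > 0. Then the function f_t(x) = (Σ_{s∈T} τ_t(s))^{-1} · ∂_t p_t(x)/τ_t(x) (when τ_t(x) > 0) solves the Laplacian-form linear system Σ_z τ_t(x)τ_t(z) (f_t(x) − f_t(z)) = ∂_t p_t(x) for all x ∈ T, provided τ_t(x) > 0 for all x. -/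
open Finset

/-- The closed-form function `f x = (∑ s, τ s)⁻¹ * dp x / τ x` solves the
Laplacian-form linear system `∑ z, τ x * τ z * (f x - f z) = dp x`. -/
theorem closed_form_laplacian_solution {T : Type*} [Fintype T] [DecidableEq T]
    (p dp τ f : T → ℝ)
    (hp : ∀ x, 0 < p x) (hpsum : ∑ x, p x = 1)
    (hdpsum : ∑ x, dp x = 0)
    (hτ : ∀ x, 0 < τ x) (hτsum : 0 < ∑ s, τ s)
    (hf : ∀ x, f x = (∑ s, τ s)⁻¹ * (dp x / τ x)) :
    ∀ x, ∑ z, τ x * τ z * (f x - f z) = dp x := by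
  intro x
  have hτzf : ∀ z, τ z * f z = (∑ s, τ s)⁻¹ * dp z := by
    intro z
    rw [hf z]
    rw [mul_comm, mul_assoc, div_mul_cancel₀ _ (hτ z).ne']
  have hsum : ∑ z, τ z * f z = 0 := by
    simp only [hτzf, ← Finset.mul_sum, hdpsum, mul_zero]
  have h1 : ∑ z, τ x * τ z * (f x - f z)
      = τ x * f x * (∑ z, τ z) - τ x * ∑ z, τ z * f z := by
    rw [Finset.mul_sum, Finset.mul_sum, ← Finset.sum_sub_distrib]
    congr 1; ext z; ring
  rw [h1, hsum, mul_zero, sub_zero, hτzf x]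
  field_simp
end

section
/- Let p be a probability mass function on a finite set T, x₁ ∈ T, and Ω = arccos(√p(x₁)) ∈ (0, π/2]. Define a_t(x) = (sin((1−t)Ω)/sin Ω)√p(x) + (sin(tΩ)/sin Ω)·δ_{x₁}(x). Then for all x ∈ T, a_t(x)^2 = (sin²((1−t)Ω)/sin²Ω) p(x) + (1 − sin²((1−t)Ω)/sin²Ω) δ_{x₁}(x). That is, the kinetic-optimal probability path between p and the delta at x₁ is a mixture path with scheduler κ_t = 1 − sin²((1−t)Ω)/sin²Ω. -/
open Finset Real

/-- The kinetic optimal path between `p` and `δ_{x₁}` is a mixture path with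
scheduler `κ_t = 1 - sin²((1-t)Ω)/sin²Ω` where `Ω = arccos √(p x₁)`. -/
theorem kinetic_optimal_path_is_mixture {T : Type*} [Fintype T] [DecidableEq T]
    (p : T → ℝ) (x₁ : T)
    (hp : ∀ x, 0 ≤ p x) (hpsum : ∑ x, p x = 1) (hplt : p x₁ < 1)
    (Ω : ℝ) (hΩ : Ω = Real.arccos (Real.sqrt (p x₁)))
    (hΩpos : 0 < Ω) (hΩle : Ω ≤ Real.pi / 2) :
    ∀ t ∈ Set.Icc (0:ℝ) 1, ∀ x : T,
      (Real.sin ((1 - t) * Ω) / Real.sin Ω * Real.sqrt (p x)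
        + Real.sin (t * Ω) / Real.sin Ω * (if x = x₁ then (1:ℝ) else 0)) ^ 2
      = Real.sin ((1 - t) * Ω) ^ 2 / Real.sin Ω ^ 2 * p x
        + (1 - Real.sin ((1 - t) * Ω) ^ 2 / Real.sin Ω ^ 2)
            * (if x = x₁ then (1:ℝ) else 0) := by
  intro t _ x
  have hsin : Real.sin Ω ≠ 0 := by
    have : 0 < Real.sin Ω := Real.sin_pos_of_pos_of_lt_pi hΩpos
      (lt_of_le_of_lt hΩle (by linarith [Real.pi_pos]))
    linarith
  have hcos : Real.cos Ω = Real.sqrt (p x₁) := by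
    rw [hΩ, Real.cos_arccos (by linarith [Real.sqrt_nonneg (p x₁)])
      (by rw [show (1:ℝ) = Real.sqrt 1 by simp]
          exact Real.sqrt_le_sqrt (le_of_lt hplt))]
  by_cases hx : x = x₁
  · subst hx
    simp only [if_pos rfl, mul_one]
    have hst : Real.sin (t * Ω) =
        Real.sin Ω * Real.cos ((1 - t) * Ω)
          - Real.cos Ω * Real.sin ((1 - t) * Ω) := by
      have : t * Ω = Ω - (1 - t) * Ω := by ring
      rw [this, Real.sin_sub]
    have hpx : p x = Real.cos Ω ^ 2 := by
      rw [hcos, sq, Real.mul_self_sqrt (hp x)]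
    have hsc : Real.sin ((1 - t) * Ω) ^ 2 = 1 - Real.cos ((1 - t) * Ω) ^ 2 := by
      have := Real.sin_sq_add_cos_sq ((1 - t) * Ω)
      linarith
    have hsq : Real.sin Ω ^ 2 = 1 - Real.cos Ω ^ 2 := by
      have := Real.sin_sq_add_cos_sq Ω; linarith
    rw [← hcos, hst, hpx]
    field_simp
    simp only [↓reduceIte, mul_one, one_mul]
    nlinarith [Real.sin_sq_add_cos_sq Ω, Real.sin_sq_add_cos_sq ((1 - t) * Ω)]
  · simp only [if_neg hx, mul_zero, add_zero, mul_pow, div_pow,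
      Real.sq_sqrt (hp x)]
end

section
/- Let T be a finite set, p a probability mass function on T, x₁ ∈ T, and κ : [0,1] → [0,1) a differentiable scheduler with κ_0 = 0. Define the mixture path p_t(x) = (1−κ_t)p(x) + κ_t δ_{x₁}(x). Then the flux j_t(x,z) = [p_t(z)∂_t p_t(x) − p_t(x)∂_t p_t(z)]_+ (for x ≠ z), converted to a velocity u_t(x,z) = j_t(x,z)/p_t(z) when p_t(z) > 0, satisfies u_t(x,z) = (κ̇_t/(1−κ_t))(δ_{x₁}(x) − δ_z(x)) for all x ≠ z with p_t(z) > 0, assuming κ̇_t ≥ 0. -/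
open Finset

/-- For mixture paths, the velocity obtained from the kinetic-optimal flux
`j x z = [p_t z * ∂p_t x - p_t x * ∂p_t z]₊` equals
`(κ̇/(1-κ)) (δ_{x₁}(x) - δ_z(x))` for `x ≠ z` with `p_t z > 0`. -/
theorem mixture_path_velocity {T : Type*} [Fintype T] [DecidableEq T]
    (p : T → ℝ) (x₁ : T)
    (hp : ∀ x, 0 ≤ p x) (hpsum : ∑ x, p x = 1)
    (κ κ' : ℝ) (hκ0 : 0 ≤ κ) (hκ1 : κ < 1) (hκ' : 0 ≤ κ')
    (pt dpt : T → ℝ) (j : T → T → ℝ)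
    (hpt : ∀ x, pt x = (1 - κ) * p x + κ * (if x = x₁ then (1:ℝ) else 0))
    (hdpt : ∀ x, dpt x = κ' * ((if x = x₁ then (1:ℝ) else 0) - p x))
    (hj : ∀ x z, j x z = max (pt z * dpt x - pt x * dpt z) 0) :
    ∀ x z, x ≠ z → 0 < pt z →
      j x z / pt z
        = κ' / (1 - κ) * ((if x = x₁ then (1:ℝ) else 0)
            - (if x = z then (1:ℝ) else 0)) := by
  intro x z hxz hz
  have h1 : (0:ℝ) < 1 - κ := by linarith
  rw [hpt z] at hz
  rw [hj x z, hpt x, hpt z, hdpt x, hdpt z]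
  by_cases hx : x = x₁ <;> by_cases hzx : z = x₁
  · exact absurd (hx.trans hzx.symm) hxz
  · subst hx
    have hpz : 0 < p z := by
      simp only [if_neg hzx] at hz; nlinarith
    simp only [if_pos rfl, if_neg hzx, if_neg hxz, if_true]
    rw [max_eq_left (by nlinarith)]
    field_simp
    ring
  · simp only [if_neg hx, if_pos hzx, if_neg hxz]
    have hpx : 0 ≤ p x := hp x
    rw [max_eq_right (by nlinarith)]
    simp
  · simp only [if_neg hx, if_neg hzx, if_neg hxz]
    rw [max_eq_right (by nlinarith)]
    simp
end

section
/- Let T be a finite set, p a probability mass function on T, x₁ ∈ T with p(x₁) < 1, and κ : [0,1) → [0,1) differentiable with κ̇_t ≥ 0. Define p_t(x) = (1−κ_t)p(x) + κ_t δ_{x₁}(x) and, for x ≠ z, u_t(x,z) = (κ̇_t/(1−κ_t))(δ_{x₁}(x) − δ_z(x)), and u_t(z,z) = −Σ_{x≠z} u_t(x,z). Then u_t generates p_t, i.e., ∂_t p_t(x) = Σ_{z∈T} u_t(x,z) p_t(z) for all x ∈ T. -/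
open Finset

/-- The mixture-path velocity generates the mixture probability path:
the Kolmogorov forward equation holds. -/
theorem mixture_velocity_generates {T : Type*} [Fintype T] [DecidableEq T]
    (p : T → ℝ) (x₁ : T)
    (hp : ∀ x, 0 ≤ p x) (hpsum : ∑ x, p x = 1) (hplt : p x₁ < 1)
    (κ κ' : ℝ) (hκ0 : 0 ≤ κ) (hκ1 : κ < 1) (hκ' : 0 ≤ κ')
    (pt dpt : T → ℝ) (u : T → T → ℝ)
    (hpt : ∀ x, pt x = (1 - κ) * p x + κ * (if x = x₁ then (1:ℝ) else 0))
    (hdpt : ∀ x, dpt x = κ' * ((if x = x₁ then (1:ℝ) else 0) - p x))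
    (hu_off : ∀ x z, x ≠ z →
      u x z = κ' / (1 - κ) * ((if x = x₁ then (1:ℝ) else 0)
                - (if x = z then (1:ℝ) else 0)))
    (hu_diag : ∀ z, u z z = - ∑ x ∈ Finset.univ.erase z, u x z) :
    ∀ x, dpt x = ∑ z, u x z * pt z := by
  have hne : (1:ℝ) - κ ≠ 0 := by linarith
  set c := κ' / (1 - κ) with hc
  have hcκ : c * (1 - κ) = κ' := by rw [hc]; field_simp
  have hsum_pt : ∑ z, pt z = 1 := by
    simp only [hpt]
    rw [Finset.sum_add_distrib, ← Finset.mul_sum, hpsum, ← Finset.mul_sum]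
    simp
  intro x
  by_cases hx : x = x₁
  · subst hx
    have hdiag : u x x = 0 := by
      rw [hu_diag]
      rw [neg_eq_zero]
      apply Finset.sum_eq_zero
      intro y hy
      rw [hu_off y x (Finset.ne_of_mem_erase hy)]
      ring
    have hoff : ∀ z ∈ Finset.univ.erase x, u x z * pt z = c * pt z := by
      intro z hz
      have hzx : z ≠ x := Finset.ne_of_mem_erase hz
      rw [hu_off x z (Ne.symm hzx)]
      simp [Ne.symm hzx]
    rw [← Finset.add_sum_erase _ _ (Finset.mem_univ x), hdiag,
      Finset.sum_congr rfl hoff, ← Finset.mul_sum]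
    have herase : ∑ z ∈ Finset.univ.erase x, pt z = 1 - pt x := by
      have := Finset.add_sum_erase Finset.univ pt (Finset.mem_univ x)
      rw [hsum_pt] at this
      linarith
    rw [herase, hdpt, hpt]
    simp only [if_pos rfl, if_true]
    rw [hc]
    field_simp
    ring
  · have hoff : ∀ z ∈ Finset.univ.erase x, u x z * pt z = 0 := by
      intro z hz
      have hzx : z ≠ x := Finset.ne_of_mem_erase hz
      rw [hu_off x z (Ne.symm hzx)]
      simp [hx, Ne.symm hzx]
    have hdiag : u x x = -c := by
      rw [hu_diag]
      have : ∑ y ∈ Finset.univ.erase x, u y x = c := by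
        rw [← Finset.add_sum_erase _ _ (Finset.mem_erase.mpr ⟨Ne.symm hx, Finset.mem_univ x₁⟩)]
        rw [hu_off x₁ x (Ne.symm hx)]
        have : ∑ y ∈ (Finset.univ.erase x).erase x₁, u y x = 0 := by
          apply Finset.sum_eq_zero
          intro y hy
          have hy1 : y ≠ x₁ := Finset.ne_of_mem_erase hy
          have hyx : y ≠ x := Finset.ne_of_mem_erase (Finset.mem_of_mem_erase hy)
          rw [hu_off y x hyx]
          simp [hy1, hyx]
        rw [this]
        simp [Ne.symm hx]
      rw [this]
    rw [← Finset.add_sum_erase _ _ (Finset.mem_univ x),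
      Finset.sum_eq_zero hoff, add_zero, hdiag, hdpt, hpt]
    simp only [if_neg hx]
    rw [hc]
    field_simp
    ring
end

section
/- Let T be a finite set with |T| = K, and let p_t be a strictly positive differentiable probability path on T. Define the flux j_t(x,z) = (1/K)[∂_t p_t(x) − ∂_t p_t(z)]_+ for x ≠ z. Then j_t is non-negative and satisfies the discrete continuity equation Σ_{z≠x} j_t(z,x) − Σ_{z≠x} j_t(x,z) = −∂_t p_t(x) for all x. -/
open Finset

/-- The flux `j x z = (1/K) [dp x - dp z]₊` is non-negative and satisfies the
discrete continuity equation. -/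
theorem uniform_weight_flux_continuity {T : Type*} [Fintype T] [DecidableEq T]
    (p dp : T → ℝ)
    (hp : ∀ x, 0 < p x) (hpsum : ∑ x, p x = 1)
    (hdpsum : ∑ x, dp x = 0)
    (j : T → T → ℝ)
    (hj : ∀ x z, j x z = (1 / (Fintype.card T : ℝ)) * max (dp x - dp z) 0) :
    (∀ x z, 0 ≤ j x z) ∧
    (∀ x, ((∑ z ∈ Finset.univ.erase x, j z x)
        - ∑ z ∈ Finset.univ.erase x, j x z) = - dp x) := by
  have hne : Nonempty T := by
    by_contra h
    rw [not_nonempty_iff] at h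
    simp [Finset.univ_eq_empty] at hpsum
  have hK : (0 : ℝ) < (Fintype.card T : ℝ) := by
    exact_mod_cast Fintype.card_pos
  constructor
  · intro x z
    rw [hj]
    positivity
  · intro x
    rw [← Finset.sum_sub_distrib]
    have key : ∀ z ∈ Finset.univ.erase x,
        j z x - j x z = (1 / (Fintype.card T : ℝ)) * (dp z - dp x) := by
      intro z _
      rw [hj, hj, ← mul_sub]
      congr 1
      rcases le_total (dp z) (dp x) with h | h
      · rw [max_eq_right (by linarith : dp z - dp x ≤ 0),
          max_eq_left (by linarith : (0:ℝ) ≤ dp x - dp z)]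
        ring
      · rw [max_eq_left (by linarith : (0:ℝ) ≤ dp z - dp x),
          max_eq_right (by linarith : dp x - dp z ≤ 0)]
        ring
    rw [Finset.sum_congr rfl key, ← Finset.mul_sum, Finset.sum_sub_distrib,
      Finset.sum_const, Finset.card_erase_of_mem (Finset.mem_univ x),
      Finset.card_univ, Finset.sum_erase_eq_sub (Finset.mem_univ x), hdpsum,
      nsmul_eq_mul]
    have hcard : ((Fintype.card T - 1 : ℕ) : ℝ) = (Fintype.card T : ℝ) - 1 := by
      have : 1 ≤ Fintype.card T := Fintype.card_pos
      push_cast [this]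
      ring
    rw [hcard]
    field_simp
    ring
end

section
/- Let T be a finite set, p_t a probability path on T, and for each x₁ ∈ T let u_t(·,·|x₁) be a rate matrix on T generating the conditional path p_t(·|x₁), i.e., ∂_t p_t(x|x₁) = Σ_z u_t(x,z|x₁) p_t(z|x₁). Let q be a probability mass function on T and p_t(x) = Σ_{x₁} p_t(x|x₁) q(x₁). Define the posterior p_{1|t}(x₁|z) = p_t(z|x₁)q(x₁)/p_t(z) when p_t(z) > 0, and the marginal velocity u_t(x,z) = Σ_{x₁} u_t(x,z|x₁) p_{1|t}(x₁|z). Then u_t generates p_t: ∂_t p_t(x) = Σ_z u_t(x,z) p_t(z) for all x with the convention that terms with p_t(z) = 0 vanish. -/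
open Finset

/-- The marginal velocity obtained by averaging conditional velocities against
the posterior generates the marginal probability path (terms with
`p_t(z) = 0` vanish by convention). -/
theorem marginal_velocity_generates {T : Type*} [Fintype T] [DecidableEq T]
    (pc dpc : T → T → ℝ)     -- pc x x₁ = p_t(x | x₁), dpc its time derivative
    (uc : T → T → T → ℝ)     -- uc x z x₁ = u_t(x, z | x₁)
    (q pm dpm : T → ℝ)
    (hq : ∀ x₁, 0 ≤ q x₁) (hqsum : ∑ x₁, q x₁ = 1)
    (hpc : ∀ x₁ x, 0 ≤ pc x x₁)
    (hgen : ∀ x₁ x, dpc x x₁ = ∑ z, uc x z x₁ * pc z x₁)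
    (hpm : ∀ x, pm x = ∑ x₁, pc x x₁ * q x₁)
    (hdpm : ∀ x, dpm x = ∑ x₁, dpc x x₁ * q x₁)
    (hsafe : ∀ z x₁, pm z = 0 → pc z x₁ = 0) :
    ∀ x, dpm x
      = ∑ z, if 0 < pm z then
          (∑ x₁, uc x z x₁ * (pc z x₁ * q x₁ / pm z)) * pm z
        else 0 := by
  intro x
  have key : ∀ z, (if 0 < pm z then
      (∑ x₁, uc x z x₁ * (pc z x₁ * q x₁ / pm z)) * pm z else 0)
      = ∑ x₁, uc x z x₁ * pc z x₁ * q x₁ := by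
    intro z
    by_cases h : 0 < pm z
    · simp only [h, if_true]
      rw [Finset.sum_mul]
      refine Finset.sum_congr rfl fun x₁ _ => ?_
      field_simp
    · have hz : pm z = 0 := le_antisymm (not_lt.mp h)
        (by rw [hpm]; exact Finset.sum_nonneg fun x₁ _ => mul_nonneg (hpc x₁ z) (hq x₁))
      simp only [h, if_false]
      symm
      refine Finset.sum_eq_zero fun x₁ _ => ?_
      rw [hsafe z x₁ hz]; ring
  rw [hdpm]
  simp only [key]
  rw [Finset.sum_comm]
  refine Finset.sum_congr rfl fun x₁ _ => ?_
  rw [hgen, Finset.sum_mul]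
end
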